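/- arXiv:1110.0966 — 2 statements merged into one kernel-verified Lean document; each statement's English description precedes it below -/
import Mathlib

section
/- Assume that ⋂_{m∈ℕ} Φ^m(A) = {0} and let w be a positive integer. Then the following four statements are equivalent: (i) the digit set D is w-subadditive; (ii) for every multi-expansion μ there is a w-NAF-expansion ξ with the same value and with weight(ξ) ≤ weight(μ); (iii) for all w-NAF-expansions η and θ there is a w-NAF-expansion ξ with value(ξ) = value(η) + value(θ) and weight(ξ) ≤ weight(η) + weight(θ); (iv) every z ∈ A that is the value of some multi-expansion is also the value of an optimal w-NAF-expansion. -/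
/-- A multi-expansion over the digit set `D`: a finite multiset of pairs `(d, n)`
with `d ∈ D` nonzero. -/
def IsMultiExpansion {A : Type*} [AddCommGroup A] (D : Finset A)
    (μ : Multiset (A × ℕ)) : Prop :=
  ∀ x ∈ μ, x.1 ∈ D ∧ x.1 ≠ 0

/-- The value of a multi-expansion: `∑ Φ^n(d)`. -/
def mvalue {A : Type*} [AddCommGroup A] (Φ : AddMonoid.End A)
    (μ : Multiset (A × ℕ)) : A :=
  (μ.map fun x => (Φ ^ x.2) x.1).sum

/-- An expansion: a finitely supported sequence of digits. -/
def IsExpansion {A : Type*} [AddCommGroup A] (D : Finset A) (η : ℕ →₀ A) : Prop :=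
  ∀ n, η n ∈ D

/-- The `w`-NAF condition: any two distinct nonzero digits have indices at
distance at least `w`. -/
def IsWNAF {A : Type*} [AddCommGroup A] (w : ℕ) (η : ℕ →₀ A) : Prop :=
  ∀ m n : ℕ, m ≠ n → η m ≠ 0 → η n ≠ 0 → (w : ℤ) ≤ |(m : ℤ) - (n : ℤ)|

/-- The value of an expansion: `∑ Φ^n(η_n)`. -/
def evalue {A : Type*} [AddCommGroup A] (Φ : AddMonoid.End A) (η : ℕ →₀ A) : A :=
  η.sum fun n d => (Φ ^ n) d

/-- The weight of an expansion: the number of nonzero digits. -/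
def eweight {A : Type*} [AddCommGroup A] (η : ℕ →₀ A) : ℕ :=
  η.support.card

/-- The digit set `D` is `w`-subadditive: the sum of the values of two
singletons has a `w`-NAF-expansion of weight at most `2`. -/
def WSubadditive {A : Type*} [AddCommGroup A] (Φ : AddMonoid.End A)
    (D : Finset A) (w : ℕ) : Prop :=
  ∀ c ∈ D, ∀ d ∈ D, c ≠ 0 → d ≠ 0 → ∀ m n : ℕ,
    ∃ η : ℕ →₀ A, IsExpansion D η ∧ IsWNAF w η ∧
      evalue Φ η = (Φ ^ m) c + (Φ ^ n) d ∧ eweight η ≤ 2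

section OptimalityAux

variable {A : Type*} [AddCommGroup A]

lemma opt_pow_apply (Φ : AddMonoid.End A) (i j : ℕ) (x : A) :
    (Φ ^ i) ((Φ ^ j) x) = (Φ ^ (i + j)) x := by
  rw [pow_add]; rfl

lemma opt_range_anti (Φ : AddMonoid.End A) {i j : ℕ} (h : i ≤ j) :
    Set.range ⇑(Φ ^ j) ⊆ Set.range ⇑(Φ ^ i) := by
  rintro x ⟨y, rfl⟩
  exact ⟨(Φ ^ (j - i)) y, by rw [opt_pow_apply, Nat.add_sub_cancel' h]⟩

lemma opt_mvalue_zero (Φ : AddMonoid.End A) : mvalue Φ (0 : Multiset (A × ℕ)) = 0 := by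
  simp [mvalue]

lemma opt_mvalue_cons (Φ : AddMonoid.End A) (x : A × ℕ) (s : Multiset (A × ℕ)) :
    mvalue Φ (x ::ₘ s) = (Φ ^ x.2) x.1 + mvalue Φ s := by
  simp [mvalue]

lemma opt_mvalue_add (Φ : AddMonoid.End A) (s t : Multiset (A × ℕ)) :
    mvalue Φ (s + t) = mvalue Φ s + mvalue Φ t := by
  simp [mvalue]

lemma opt_evalue_zero (Φ : AddMonoid.End A) : evalue Φ (0 : ℕ →₀ A) = 0 := by
  simp [evalue]

lemma opt_evalue_single (Φ : AddMonoid.End A) (n : ℕ) (d : A) :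
    evalue Φ (Finsupp.single n d) = (Φ ^ n) d := by
  rw [evalue]
  exact Finsupp.sum_single_index (map_zero _)

lemma opt_evalue_add (Φ : AddMonoid.End A) (f g : ℕ →₀ A) :
    evalue Φ (f + g) = evalue Φ f + evalue Φ g := by
  classical
  rw [evalue, evalue, evalue]
  exact Finsupp.sum_add_index (fun a _ => map_zero _) (fun a _ b₁ b₂ => map_add _ _ _)

/-- `0` is a valid expansion. -/
lemma opt_zero_exp {D : Finset A} (h0 : (0 : A) ∈ D) : IsExpansion D (0 : ℕ →₀ A) := by
  intro n; simpa using h0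

lemma opt_zero_naf (w : ℕ) : IsWNAF w (0 : ℕ →₀ A) := by
  intro m n _ hm _
  simp at hm

lemma opt_eweight_zero : eweight (0 : ℕ →₀ A) = 0 := by simp [eweight]

/-- the multiset associated to an expansion -/
def optToM (η : ℕ →₀ A) : Multiset (A × ℕ) := η.support.val.map fun n => (η n, n)

lemma opt_toM_card (η : ℕ →₀ A) : Multiset.card (optToM η) = eweight η := by
  rw [optToM, Multiset.card_map]; rfl

lemma opt_toM_mvalue (Φ : AddMonoid.End A) (η : ℕ →₀ A) :
    mvalue Φ (optToM η) = evalue Φ η := by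
  rw [mvalue, optToM, Multiset.map_map, evalue, Finsupp.sum, Finset.sum]
  rfl

lemma opt_toM_mem {η : ℕ →₀ A} {x : A × ℕ} (hx : x ∈ optToM η) :
    x.1 = η x.2 ∧ x.2 ∈ η.support := by
  rw [optToM, Multiset.mem_map] at hx
  obtain ⟨n, hn, rfl⟩ := hx
  exact ⟨rfl, hn⟩

lemma opt_toM_ME {D : Finset A} {η : ℕ →₀ A} (hexp : IsExpansion D η) :
    IsMultiExpansion D (optToM η) := by
  intro x hx
  obtain ⟨h1, h2⟩ := opt_toM_mem hx
  rw [Finsupp.mem_support_iff] at h2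
  exact ⟨h1 ▸ hexp x.2, h1 ▸ h2⟩

/-- shifting an expansion up by `s` -/
def optEmb (s : ℕ) : ℕ ↪ ℕ := ⟨fun n => n + s, add_left_injective s⟩

noncomputable def optShift (η : ℕ →₀ A) (s : ℕ) : ℕ →₀ A := Finsupp.embDomain (optEmb s) η

lemma opt_shift_apply (η : ℕ →₀ A) (s b : ℕ) : optShift η s (b + s) = η b :=
  Finsupp.embDomain_apply_self (optEmb s) η b

lemma opt_shift_support {η : ℕ →₀ A} {s n : ℕ} (hn : n ∈ (optShift η s).support) :
    ∃ b ∈ η.support, n = b + s := by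
  rw [optShift, Finsupp.support_embDomain, Finset.mem_map] at hn
  obtain ⟨b, hb, hbe⟩ := hn
  exact ⟨b, hb, hbe.symm⟩

lemma opt_shift_exp {D : Finset A} (h0 : (0 : A) ∈ D) {η : ℕ →₀ A} {s : ℕ}
    (hexp : IsExpansion D η) : IsExpansion D (optShift η s) := by
  intro n
  by_cases hn : (optShift η s) n = 0
  · rw [hn]; exact h0
  · obtain ⟨b, _, rfl⟩ := opt_shift_support (Finsupp.mem_support_iff.2 hn)
    rw [opt_shift_apply]
    exact hexp b

lemma opt_shift_naf {w : ℕ} {η : ℕ →₀ A} {s : ℕ} (hnaf : IsWNAF w η) :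
    IsWNAF w (optShift η s) := by
  intro m n hmn hm hn
  obtain ⟨a, _, rfl⟩ := opt_shift_support (Finsupp.mem_support_iff.2 hm)
  obtain ⟨b, _, rfl⟩ := opt_shift_support (Finsupp.mem_support_iff.2 hn)
  rw [opt_shift_apply] at hm hn
  have hab : a ≠ b := fun h => hmn (by rw [h])
  have := hnaf a b hab hm hn
  have he : ((a + s : ℕ) : ℤ) - ((b + s : ℕ) : ℤ) = (a : ℤ) - b := by push_cast; ring
  rw [he]
  exact this

lemma opt_shift_eweight (η : ℕ →₀ A) (s : ℕ) : eweight (optShift η s) = eweight η := by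
  simp [optShift, eweight, Finsupp.support_embDomain]

lemma opt_shift_evalue (Φ : AddMonoid.End A) (η : ℕ →₀ A) (s : ℕ) :
    evalue Φ (optShift η s) = (Φ ^ s) (evalue Φ η) := by
  rw [optShift, evalue, Finsupp.sum_embDomain, evalue, map_finsuppSum]
  refine Finsupp.sum_congr fun a _ => ?_
  show (Φ ^ (a + s)) _ = (Φ ^ s) ((Φ ^ a) _)
  rw [opt_pow_apply, Nat.add_comm]

lemma opt_mvalue_mem_range (Φ : AddMonoid.End A) (ν : Multiset (A × ℕ)) (ℓ : ℕ)
    (hfl : ∀ x ∈ ν, ℓ ≤ x.2) : mvalue Φ ν ∈ Set.range ⇑(Φ ^ ℓ) := by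
  induction ν using Multiset.induction_on with
  | empty => exact ⟨0, by rw [map_zero, opt_mvalue_zero]⟩
  | cons a s ih =>
    obtain ⟨y, hy⟩ := ih fun x hx => hfl x (Multiset.mem_cons_of_mem hx)
    refine ⟨(Φ ^ (a.2 - ℓ)) a.1 + y, ?_⟩
    rw [map_add, hy, opt_pow_apply, Nat.add_sub_cancel' (hfl a (Multiset.mem_cons_self a s)),
      opt_mvalue_cons]

lemma opt_mvalue_shift_down (Φ : AddMonoid.End A) (ν : Multiset (A × ℕ)) (s : ℕ)
    (h : ∀ x ∈ ν, s ≤ x.2) :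
    (Φ ^ s) (mvalue Φ (ν.map fun x => (x.1, x.2 - s))) = mvalue Φ ν := by
  induction ν using Multiset.induction_on with
  | empty => simp [opt_mvalue_zero]
  | cons a t ih =>
    rw [Multiset.map_cons, opt_mvalue_cons, opt_mvalue_cons, map_add,
      ih fun x hx => h x (Multiset.mem_cons_of_mem hx)]
    congr 1
    show (Φ ^ s) ((Φ ^ (a.2 - s)) a.1) = _
    rw [opt_pow_apply, Nat.add_comm, Nat.sub_add_cancel (h a (Multiset.mem_cons_self a t))]

lemma opt_abs_ge {w m n : ℕ} (h : n + w ≤ m) : (w : ℤ) ≤ |(m : ℤ) - (n : ℤ)| := by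
  rw [abs_of_nonneg (by omega : (0:ℤ) ≤ (m : ℤ) - (n : ℤ))]
  omega

lemma opt_window {w m n ℓ : ℕ} (hm1 : ℓ ≤ m) (hm2 : m < ℓ + w) (hn1 : ℓ ≤ n)
    (hn2 : n < ℓ + w) (h : (w : ℤ) ≤ |(m : ℤ) - (n : ℤ)|) : False := by
  have h2 : |(m : ℤ) - (n : ℤ)| < w := abs_sub_lt_iff.mpr ⟨by omega, by omega⟩
  omega

end OptimalityAux


section OptimalityHard

variable {A : Type*} [AddCommGroup A]

/-- Attaching a single digit below a w-NAF whose support lies at distance ≥ w above. -/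
lemma opt_attach (Φ : AddMonoid.End A) {D : Finset A} {w : ℕ} (hw : 0 < w)
    {ξ : ℕ →₀ A} (hexp : IsExpansion D ξ) (hnaf : IsWNAF w ξ) {t : ℕ} {d : A}
    (hd : d ∈ D) (hsupp : ∀ n ∈ ξ.support, t + w ≤ n) :
    IsExpansion D (ξ + Finsupp.single t d) ∧ IsWNAF w (ξ + Finsupp.single t d) ∧
      evalue Φ (ξ + Finsupp.single t d) = evalue Φ ξ + (Φ ^ t) d ∧
      eweight (ξ + Finsupp.single t d) ≤ eweight ξ + 1 := by
  classical
  have htns : ξ t = 0 := by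
    by_contra h
    have := hsupp t (Finsupp.mem_support_iff.2 h)
    omega
  have hmem : ∀ n, (ξ + Finsupp.single t d) n ≠ 0 → (n = t ∨ n ∈ ξ.support) := by
    intro n hn
    by_cases hnt : n = t
    · exact Or.inl hnt
    · right
      rw [Finsupp.add_apply, Finsupp.single_eq_of_ne' (Ne.symm hnt), add_zero] at hn
      exact Finsupp.mem_support_iff.2 hn
  refine ⟨?_, ?_, ?_, ?_⟩
  · intro n
    by_cases hnt : n = t
    · subst hnt
      rw [Finsupp.add_apply, htns, Finsupp.single_eq_same, zero_add]
      exact hd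
    · rw [Finsupp.add_apply, Finsupp.single_eq_of_ne' (Ne.symm hnt), add_zero]
      exact hexp n
  · intro m n hmn hm hn
    rcases hmem m hm with rfl | hms
    · rcases hmem n hn with rfl | hns
      · exact absurd rfl hmn
      · have := hsupp n hns
        rw [abs_sub_comm]
        exact opt_abs_ge (by omega)
    · rcases hmem n hn with rfl | hns
      · have := hsupp m hms
        exact opt_abs_ge (by omega)
      · have hms' : m ∈ ξ.support := hms
        refine hnaf m n hmn ?_ ?_
        · exact Finsupp.mem_support_iff.1 hms
        · exact Finsupp.mem_support_iff.1 hns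
  · rw [opt_evalue_add, opt_evalue_single]
  · rw [eweight, eweight]
    calc (ξ + Finsupp.single t d).support.card
        ≤ (ξ.support ∪ (Finsupp.single t d).support).card :=
          Finset.card_le_card Finsupp.support_add
      _ ≤ ξ.support.card + (Finsupp.single t d).support.card := Finset.card_union_le _ _
      _ ≤ ξ.support.card + 1 := by
          have := Finset.card_le_card (Finsupp.support_single_subset (a := t) (b := d))
          simp at this
          omega

lemma opt_arith {G G' c r : ℕ} (h1 : G' + 1 ≤ G) (h2 : c ≤ r) :
    G' * (r + 1) + c < G * (r + 1) := by
  have h3 : (G' + 1) * (r + 1) ≤ G * (r + 1) := Nat.mul_le_mul_right _ h1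
  have h4 : (G' + 1) * (r + 1) = G' * (r + 1) + (r + 1) := by ring
  omega

/-- The hard direction: subadditivity implies every multi-expansion is dominated
by a w-NAF. -/
lemma opt_hard {D : Finset A} (Φ : AddMonoid.End A) {w : ℕ} (h0 : (0 : A) ∈ D)
    (hInt : (⋂ m : ℕ, Set.range (Φ ^ m : AddMonoid.End A)) = {0})
    (hw : 0 < w) (hsub : WSubadditive Φ D w) :
    ∀ r (μ : Multiset (A × ℕ)), IsMultiExpansion D μ → Multiset.card μ = r →
      ∃ η : ℕ →₀ A, IsExpansion D η ∧ IsWNAF w η ∧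
        evalue Φ η = mvalue Φ μ ∧ eweight η ≤ r := by
  classical
  intro r
  induction r using Nat.strong_induction_on with
  | _ r IH =>
  have key : ∀ k ℓ F (ν : Multiset (A × ℕ)), IsMultiExpansion D ν →
      Multiset.card ν = r → (∀ x ∈ ν, ℓ ≤ x.2) →
      mvalue Φ ν ∉ Set.range ⇑(Φ ^ F) →
      (F - ℓ) * (r + 1) + Multiset.card (ν.filter fun x => x.2 < ℓ + w) ≤ k →
      ∃ η : ℕ →₀ A, IsExpansion D η ∧ IsWNAF w η ∧
        evalue Φ η = mvalue Φ ν ∧ eweight η ≤ r := by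
    intro k
    induction k using Nat.strong_induction_on with
    | _ k IHk =>
    intro ℓ F ν hME hcard hfl hF hmeas
    have hlF : ℓ < F := by
      by_contra hcon
      push_neg at hcon
      exact hF (opt_range_anti Φ hcon (opt_mvalue_mem_range Φ ν ℓ hfl))
    by_cases hc2 : 2 ≤ Multiset.card (ν.filter fun x => x.2 < ℓ + w)
    · -- rewrite case: two entries in the window, combine them by subadditivity
      have hpos : 0 < Multiset.card (ν.filter fun x => x.2 < ℓ + w) := by omega
      obtain ⟨a, haf⟩ := Multiset.card_pos_iff_exists_mem.1 hpos
      obtain ⟨s, hs⟩ := Multiset.exists_cons_of_mem haf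
      have hcs : 0 < Multiset.card s := by
        rw [hs, Multiset.card_cons] at hc2; omega
      obtain ⟨b, hbs⟩ := Multiset.card_pos_iff_exists_mem.1 hcs
      obtain ⟨s', hs'⟩ := Multiset.exists_cons_of_mem hbs
      have hle : (a ::ₘ b ::ₘ s') ≤ ν := by
        rw [← hs', ← hs]; exact Multiset.filter_le _ _
      obtain ⟨v, hv⟩ := Multiset.le_iff_exists_add.1 hle
      set u := s' + v with hu
      have hν : ν = a ::ₘ b ::ₘ u := by
        rw [hv, hu, Multiset.cons_add, Multiset.cons_add]
      have haν : a ∈ ν := Multiset.mem_of_le hle (Multiset.mem_cons_self _ _)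
      have hbν : b ∈ ν := Multiset.mem_of_le hle
        (Multiset.mem_cons_of_mem (Multiset.mem_cons_self _ _))
      have hpa : a.2 < ℓ + w := (Multiset.mem_filter.1 haf).2
      have hpb : b.2 < ℓ + w := by
        have : b ∈ Multiset.filter (fun x => x.2 < ℓ + w) ν := by
          rw [hs]; exact Multiset.mem_cons_of_mem (hs' ▸ Multiset.mem_cons_self b s')
        exact (Multiset.mem_filter.1 this).2
      have hfa := hfl a haν
      have hfb := hfl b hbν
      obtain ⟨haD, ha0⟩ := hME a haν
      obtain ⟨hbD, hb0⟩ := hME b hbν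
      set m₀ := min a.2 b.2 with hm₀
      obtain ⟨η₀, hexp₀, hnaf₀, hval₀, hwt₀⟩ :=
        hsub a.1 haD b.1 hbD ha0 hb0 (a.2 - m₀) (b.2 - m₀)
      set η := optShift η₀ m₀ with hηdef
      have hvalη : evalue Φ η = (Φ ^ a.2) a.1 + (Φ ^ b.2) b.1 := by
        rw [hηdef, opt_shift_evalue, hval₀, map_add, opt_pow_apply, opt_pow_apply,
          Nat.add_comm m₀ (a.2 - m₀), Nat.add_comm m₀ (b.2 - m₀),
          Nat.sub_add_cancel (min_le_left _ _), Nat.sub_add_cancel (min_le_right _ _)]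
      have hexpη : IsExpansion D η := opt_shift_exp h0 hexp₀
      have hnafη : IsWNAF w η := opt_shift_naf hnaf₀
      have hwtη : eweight η ≤ 2 := by rw [hηdef, opt_shift_eweight]; exact hwt₀
      have hsuppη : ∀ n ∈ η.support, m₀ ≤ n := by
        intro n hn
        obtain ⟨c, _, rfl⟩ := opt_shift_support hn
        omega
      set ν' := optToM η + u with hν'
      have hME' : IsMultiExpansion D ν' := by
        intro x hx
        rw [hν', Multiset.mem_add] at hx
        rcases hx with hx | hx
        · exact opt_toM_ME hexpη x hx
        · exact hME x (by rw [hν]; exact Multiset.mem_cons_of_mem (Multiset.mem_cons_of_mem hx))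
      have hval' : mvalue Φ ν' = mvalue Φ ν := by
        rw [hν', opt_mvalue_add, opt_toM_mvalue, hvalη, hν, opt_mvalue_cons, opt_mvalue_cons,
          add_assoc]
      have hcardu : Multiset.card ν = Multiset.card u + 2 := by
        rw [hν, Multiset.card_cons, Multiset.card_cons]
      have hcard' : Multiset.card ν' = eweight η + Multiset.card u := by
        rw [hν', Multiset.card_add, opt_toM_card]
      by_cases hwη1 : eweight η ≤ 1
      · -- weight dropped: use the outer induction hypothesis
        have hlt : Multiset.card ν' < r := by omega
        obtain ⟨ξ, h1, h2, h3, h4⟩ := IH (Multiset.card ν') hlt ν' hME' rfl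
        exact ⟨ξ, h1, h2, by rw [h3, hval'], by omega⟩
      · -- weight 2: the window count strictly decreased; inner induction
        have hwη2 : eweight η = 2 := by omega
        have hflν' : ∀ x ∈ ν', ℓ ≤ x.2 := by
          intro x hx
          rw [hν', Multiset.mem_add] at hx
          rcases hx with hx | hx
          · have := (opt_toM_mem hx).2
            have := hsuppη _ this
            omega
          · exact hfl x (by rw [hν]; exact Multiset.mem_cons_of_mem (Multiset.mem_cons_of_mem hx))
        -- count of window entries of optToM η is at most 1
        have hcntη : Multiset.card ((optToM η).filter fun x => x.2 < ℓ + w) ≤ 1 := by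
          rw [optToM, Multiset.filter_map]
          rw [Multiset.card_map]
          have : Multiset.filter ((fun x : A × ℕ => x.2 < ℓ + w) ∘ fun n => (η n, n))
              η.support.val = Multiset.filter (fun n => n < ℓ + w) η.support.val := by
            apply Multiset.filter_congr
            intro n _
            simp
          rw [this, ← Finset.filter_val]
          show (η.support.filter fun n => n < ℓ + w).card ≤ 1
          rw [Finset.card_le_one]
          intro x hx y hy
          rw [Finset.mem_filter] at hx hy
          by_contra hxy
          refine opt_window (w := w) (ℓ := ℓ) ?_ hx.2 ?_ hy.2
            (hnafη x y hxy (Finsupp.mem_support_iff.1 hx.1) (Finsupp.mem_support_iff.1 hy.1))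
          · have := hsuppη x hx.1; omega
          · have := hsuppη y hy.1; omega
        have hcntν : Multiset.card (ν.filter fun x => x.2 < ℓ + w) =
            2 + Multiset.card (u.filter fun x => x.2 < ℓ + w) := by
          rw [hν, Multiset.filter_cons_of_pos (p := fun x : A × ℕ => x.2 < ℓ + w) _ hpa,
            Multiset.filter_cons_of_pos (p := fun x : A × ℕ => x.2 < ℓ + w) _ hpb,
            Multiset.card_cons, Multiset.card_cons]
          omega
        have hcntν' : Multiset.card (ν'.filter fun x => x.2 < ℓ + w) ≤
            1 + Multiset.card (u.filter fun x => x.2 < ℓ + w) := by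
          rw [hν', Multiset.filter_add, Multiset.card_add]
          omega
        have hcard'' : Multiset.card ν' = r := by omega
        have hF' : mvalue Φ ν' ∉ Set.range ⇑(Φ ^ F) := by rw [hval']; exact hF
        have hmeas' : (F - ℓ) * (r + 1) +
            Multiset.card (ν'.filter fun x => x.2 < ℓ + w) < k := by omega
        obtain ⟨ξ, h1, h2, h3, h4⟩ := IHk _ hmeas' ℓ F ν' hME' hcard'' hflν' hF' le_rfl
        exact ⟨ξ, h1, h2, by rw [h3, hval'], h4⟩
    · by_cases hc1 : Multiset.card (ν.filter fun x => x.2 < ℓ + w) = 1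
      · -- exactly one entry in the window
        obtain ⟨a, ha⟩ := Multiset.card_eq_one.1 hc1
        have haf : a ∈ Multiset.filter (fun x => x.2 < ℓ + w) ν := by
          rw [ha]; exact Multiset.mem_singleton_self a
        have haν : a ∈ ν := Multiset.mem_of_mem_filter haf
        have hpa : a.2 < ℓ + w := (Multiset.mem_filter.1 haf).2
        obtain ⟨u, hu⟩ := Multiset.exists_cons_of_mem haν
        have hfu : Multiset.filter (fun x => x.2 < ℓ + w) u = 0 := by
          rw [hu, Multiset.filter_cons_of_pos (p := fun x : A × ℕ => x.2 < ℓ + w) _ hpa] at ha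
          have := congrArg Multiset.card ha
          rw [Multiset.card_cons, Multiset.card_singleton] at this
          rw [← Multiset.card_eq_zero]; omega
        have hufloor : ∀ x ∈ u, ℓ + w ≤ x.2 := by
          intro x hx
          have := (Multiset.filter_eq_nil.1 hfu) x hx
          omega
        by_cases hta : a.2 = ℓ
        · -- peel off the bottom entry
          obtain ⟨haD, ha0⟩ := hME a haν
          have hcardu : Multiset.card u + 1 = r := by
            rw [hu, Multiset.card_cons] at hcard; omega
          set u' := u.map (fun x => (x.1, x.2 - (ℓ + w))) with hu'
          have hMEu' : IsMultiExpansion D u' := by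
            intro x hx
            rw [hu', Multiset.mem_map] at hx
            obtain ⟨y, hy, rfl⟩ := hx
            exact hME y (by rw [hu]; exact Multiset.mem_cons_of_mem hy)
          obtain ⟨η₀, hexp₀, hnaf₀, hval₀, hwt₀⟩ :=
            IH (Multiset.card u) (by omega) u' hMEu' (by rw [hu', Multiset.card_map])
          set ξ' := optShift η₀ (ℓ + w) with hξ'
          have hvalξ' : evalue Φ ξ' = mvalue Φ u := by
            rw [hξ', opt_shift_evalue, hval₀, hu', opt_mvalue_shift_down Φ u _ hufloor]
          have hsuppξ' : ∀ n ∈ ξ'.support, ℓ + w ≤ n := by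
            intro n hn
            obtain ⟨c, _, rfl⟩ := opt_shift_support hn
            omega
          obtain ⟨H1, H2, H3, H4⟩ := opt_attach Φ hw (opt_shift_exp h0 hexp₀)
            (opt_shift_naf hnaf₀) haD hsuppξ'
          refine ⟨ξ' + Finsupp.single ℓ a.1, H1, H2, ?_, ?_⟩
          · rw [H3, hvalξ', hu, opt_mvalue_cons, hta, add_comm]
          · have H5 : eweight ξ' = eweight η₀ := by rw [hξ']; exact opt_shift_eweight _ _
            rw [← hξ'] at H4
            omega
        · -- tighten the floor to a.2
          have hta' : ℓ < a.2 := by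
            have := hfl a haν; omega
          have hfl2 : ∀ x ∈ ν, a.2 ≤ x.2 := by
            intro x hx
            rw [hu] at hx
            rcases Multiset.mem_cons.1 hx with rfl | hx
            · exact le_rfl
            · have := hufloor x hx; omega
          have hcnt2 : Multiset.card (ν.filter fun x => x.2 < a.2 + w) ≤ r := by
            rw [← hcard]; exact Multiset.card_le_card (Multiset.filter_le _ _)
          have hmeas2 : (F - a.2) * (r + 1) +
              Multiset.card (ν.filter fun x => x.2 < a.2 + w) < k := by
            have harith : (F - a.2) * (r + 1) +
                Multiset.card (ν.filter fun x => x.2 < a.2 + w) < (F - ℓ) * (r + 1) :=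
              opt_arith (by omega) hcnt2
            omega
          exact IHk _ hmeas2 a.2 F ν hME hcard hfl2 hF le_rfl
      · -- no entries in the window: raise the floor by w
        have hc0 : Multiset.card (ν.filter fun x => x.2 < ℓ + w) = 0 := by omega
        have hfl2 : ∀ x ∈ ν, ℓ + w ≤ x.2 := by
          intro x hx
          have := (Multiset.filter_eq_nil.1 (Multiset.card_eq_zero.1 hc0)) x hx
          omega
        have hcnt2 : Multiset.card (ν.filter fun x => x.2 < (ℓ + w) + w) ≤ r := by
          rw [← hcard]; exact Multiset.card_le_card (Multiset.filter_le _ _)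
        have hmeas2 : (F - (ℓ + w)) * (r + 1) +
            Multiset.card (ν.filter fun x => x.2 < (ℓ + w) + w) < k := by
          have harith : (F - (ℓ + w)) * (r + 1) +
              Multiset.card (ν.filter fun x => x.2 < (ℓ + w) + w) < (F - ℓ) * (r + 1) :=
            opt_arith (by omega) hcnt2
          omega
        exact IHk _ hmeas2 (ℓ + w) F ν hME hcard hfl2 hF le_rfl
  -- top level: dispatch on whether the value is zero
  intro μ hME hcard
  by_cases hz : mvalue Φ μ = 0
  · exact ⟨0, opt_zero_exp h0, opt_zero_naf w, by rw [opt_evalue_zero, hz], by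
      rw [opt_eweight_zero]; omega⟩
  · have hF : ∃ F, mvalue Φ μ ∉ Set.range ⇑(Φ ^ F) := by
      by_contra hc
      push_neg at hc
      have : mvalue Φ μ ∈ ⋂ m : ℕ, Set.range ⇑(Φ ^ m : AddMonoid.End A) :=
        Set.mem_iInter.2 hc
      rw [hInt] at this
      exact hz this
    obtain ⟨F, hFs⟩ := hF
    exact key ((F - 0) * (r + 1) + Multiset.card (μ.filter fun x => x.2 < 0 + w)) 0 F μ
      hME hcard (fun x _ => Nat.zero_le _) hFs le_rfl

end OptimalityHard

section OptimalityEasy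

variable {A : Type*} [AddCommGroup A]

/-- a single digit as an expansion -/
lemma opt_single_props (Φ : AddMonoid.End A) {D : Finset A} {w : ℕ} (h0 : (0 : A) ∈ D)
    {d : A} {n : ℕ} (hd : d ∈ D) :
    IsExpansion D (Finsupp.single n d) ∧ IsWNAF w (Finsupp.single n d) ∧
      evalue Φ (Finsupp.single n d) = (Φ ^ n) d ∧ eweight (Finsupp.single n d) ≤ 1 := by
  classical
  refine ⟨?_, ?_, opt_evalue_single Φ n d, ?_⟩
  · intro m
    rcases eq_or_ne n m with rfl | hnm
    · rw [Finsupp.single_eq_same]; exact hd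
    · rw [Finsupp.single_eq_of_ne' hnm]; exact h0
  · intro m m' hmm' hm hm'
    have h1 : m = n := by
      by_contra h
      exact hm (Finsupp.single_eq_of_ne' (Ne.symm h))
    have h2 : m' = n := by
      by_contra h
      exact hm' (Finsupp.single_eq_of_ne' (Ne.symm h))
    exact absurd (h1.trans h2.symm) hmm'
  · have := Finset.card_le_card (Finsupp.support_single_subset (a := n) (b := d))
    simpa [eweight] using this

/-- (iii) implies (ii) -/
lemma opt_iii_to_ii (Φ : AddMonoid.End A) {D : Finset A} {w : ℕ} (h0 : (0 : A) ∈ D)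
    (hiii : ∀ η θ : ℕ →₀ A, IsExpansion D η → IsWNAF w η →
        IsExpansion D θ → IsWNAF w θ →
        ∃ ξ : ℕ →₀ A, IsExpansion D ξ ∧ IsWNAF w ξ ∧
          evalue Φ ξ = evalue Φ η + evalue Φ θ ∧
          eweight ξ ≤ eweight η + eweight θ) :
    ∀ μ : Multiset (A × ℕ), IsMultiExpansion D μ →
      ∃ η : ℕ →₀ A, IsExpansion D η ∧ IsWNAF w η ∧
        evalue Φ η = mvalue Φ μ ∧ eweight η ≤ Multiset.card μ := by
  intro μ
  induction μ using Multiset.induction_on with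
  | empty =>
    intro _
    exact ⟨0, opt_zero_exp h0, opt_zero_naf w, by rw [opt_evalue_zero, opt_mvalue_zero],
      by rw [opt_eweight_zero]; exact Nat.zero_le _⟩
  | cons a s ih =>
    intro hME
    obtain ⟨ξ', h1, h2, h3, h4⟩ := ih fun x hx => hME x (Multiset.mem_cons_of_mem hx)
    obtain ⟨haD, _⟩ := hME a (Multiset.mem_cons_self a s)
    obtain ⟨g1, g2, g3, g4⟩ := opt_single_props Φ (w := w) h0 (d := a.1) (n := a.2) haD
    obtain ⟨ξ, k1, k2, k3, k4⟩ := hiii _ _ g1 g2 h1 h2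
    refine ⟨ξ, k1, k2, ?_, ?_⟩
    · rw [k3, g3, h3, opt_mvalue_cons]
    · rw [Multiset.card_cons]; omega

end OptimalityEasy

/-- The Optimality Theorem: the four statements (w-subadditivity; every
multi-expansion can be replaced by a w-NAF-expansion of no larger weight;
sums of two w-NAF-expansions have w-NAF-expansions of no larger weight;
every element with a multi-expansion has an optimal w-NAF-expansion)
are equivalent. -/
theorem optimality_theorem {A : Type*} [AddCommGroup A] (Φ : AddMonoid.End A)
    (D : Finset A) (h0 : (0 : A) ∈ D)
    (hD : ∀ d ∈ D, d ≠ 0 → d ∉ Set.range Φ)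
    (hInt : (⋂ m : ℕ, Set.range (Φ ^ m : AddMonoid.End A)) = {0})
    (w : ℕ) (hw : 0 < w) :
    (WSubadditive Φ D w ↔
      (∀ μ : Multiset (A × ℕ), IsMultiExpansion D μ →
        ∃ η : ℕ →₀ A, IsExpansion D η ∧ IsWNAF w η ∧
          evalue Φ η = mvalue Φ μ ∧ eweight η ≤ Multiset.card μ))
    ∧
    ((∀ μ : Multiset (A × ℕ), IsMultiExpansion D μ →
        ∃ η : ℕ →₀ A, IsExpansion D η ∧ IsWNAF w η ∧
          evalue Φ η = mvalue Φ μ ∧ eweight η ≤ Multiset.card μ) ↔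
      (∀ η θ : ℕ →₀ A, IsExpansion D η → IsWNAF w η →
        IsExpansion D θ → IsWNAF w θ →
        ∃ ξ : ℕ →₀ A, IsExpansion D ξ ∧ IsWNAF w ξ ∧
          evalue Φ ξ = evalue Φ η + evalue Φ θ ∧
          eweight ξ ≤ eweight η + eweight θ))
    ∧
    ((∀ η θ : ℕ →₀ A, IsExpansion D η → IsWNAF w η →
        IsExpansion D θ → IsWNAF w θ →
        ∃ ξ : ℕ →₀ A, IsExpansion D ξ ∧ IsWNAF w ξ ∧
          evalue Φ ξ = evalue Φ η + evalue Φ θ ∧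
          eweight ξ ≤ eweight η + eweight θ) ↔
      (∀ z : A, (∃ μ : Multiset (A × ℕ), IsMultiExpansion D μ ∧ mvalue Φ μ = z) →
        ∃ η : ℕ →₀ A, IsExpansion D η ∧ IsWNAF w η ∧ evalue Φ η = z ∧
          ∀ μ : Multiset (A × ℕ), IsMultiExpansion D μ → mvalue Φ μ = z →
            eweight η ≤ Multiset.card μ)) := by
  classical
  -- (i) → (ii) : the hard direction
  have h_i_ii : WSubadditive Φ D w →
      ∀ μ : Multiset (A × ℕ), IsMultiExpansion D μ →
        ∃ η : ℕ →₀ A, IsExpansion D η ∧ IsWNAF w η ∧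
          evalue Φ η = mvalue Φ μ ∧ eweight η ≤ Multiset.card μ := by
    intro hsub μ hME
    exact opt_hard Φ h0 hInt hw hsub (Multiset.card μ) μ hME rfl
  -- (ii) → (i)
  have h_ii_i : (∀ μ : Multiset (A × ℕ), IsMultiExpansion D μ →
      ∃ η : ℕ →₀ A, IsExpansion D η ∧ IsWNAF w η ∧
        evalue Φ η = mvalue Φ μ ∧ eweight η ≤ Multiset.card μ) →
      WSubadditive Φ D w := by
    intro hii c hc d hd hc0 hd0 m n
    obtain ⟨η, h1, h2, h3, h4⟩ := hii ((c, m) ::ₘ {(d, n)}) (by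
      intro x hx
      rcases Multiset.mem_cons.1 hx with rfl | hx
      · exact ⟨hc, hc0⟩
      · rw [Multiset.mem_singleton] at hx
        subst hx
        exact ⟨hd, hd0⟩)
    refine ⟨η, h1, h2, ?_, ?_⟩
    · have hsing : mvalue Φ ({(d, n)} : Multiset (A × ℕ)) = (Φ ^ n) d := by
        simp [mvalue]
      rw [h3, opt_mvalue_cons, hsing]
    · have : Multiset.card ((c, m) ::ₘ ({(d, n)} : Multiset (A × ℕ))) = 2 := by
        rw [Multiset.card_cons, Multiset.card_singleton]
      omega
  -- (ii) → (iii)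
  have h_ii_iii : (∀ μ : Multiset (A × ℕ), IsMultiExpansion D μ →
      ∃ η : ℕ →₀ A, IsExpansion D η ∧ IsWNAF w η ∧
        evalue Φ η = mvalue Φ μ ∧ eweight η ≤ Multiset.card μ) →
      ∀ η θ : ℕ →₀ A, IsExpansion D η → IsWNAF w η →
        IsExpansion D θ → IsWNAF w θ →
        ∃ ξ : ℕ →₀ A, IsExpansion D ξ ∧ IsWNAF w ξ ∧
          evalue Φ ξ = evalue Φ η + evalue Φ θ ∧
          eweight ξ ≤ eweight η + eweight θ := by
    intro hii η θ hη1 _ hθ1 _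
    obtain ⟨ξ, h1, h2, h3, h4⟩ := hii (optToM η + optToM θ) (by
      intro x hx
      rcases Multiset.mem_add.1 hx with hx | hx
      · exact opt_toM_ME hη1 x hx
      · exact opt_toM_ME hθ1 x hx)
    refine ⟨ξ, h1, h2, ?_, ?_⟩
    · rw [h3, opt_mvalue_add, opt_toM_mvalue, opt_toM_mvalue]
    · rw [Multiset.card_add, opt_toM_card, opt_toM_card] at h4
      exact h4
  -- (iii) → (iv)
  have h_iii_iv : (∀ η θ : ℕ →₀ A, IsExpansion D η → IsWNAF w η →
      IsExpansion D θ → IsWNAF w θ →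
      ∃ ξ : ℕ →₀ A, IsExpansion D ξ ∧ IsWNAF w ξ ∧
        evalue Φ ξ = evalue Φ η + evalue Φ θ ∧
        eweight ξ ≤ eweight η + eweight θ) →
      ∀ z : A, (∃ μ : Multiset (A × ℕ), IsMultiExpansion D μ ∧ mvalue Φ μ = z) →
        ∃ η : ℕ →₀ A, IsExpansion D η ∧ IsWNAF w η ∧ evalue Φ η = z ∧
          ∀ μ : Multiset (A × ℕ), IsMultiExpansion D μ → mvalue Φ μ = z →
            eweight η ≤ Multiset.card μ := by
    intro hiii z hz
    have hii := opt_iii_to_ii Φ h0 hiii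
    have hex : ∃ n : ℕ, ∃ μ : Multiset (A × ℕ),
        IsMultiExpansion D μ ∧ mvalue Φ μ = z ∧ Multiset.card μ = n := by
      obtain ⟨μ, hME, hval⟩ := hz
      exact ⟨Multiset.card μ, μ, hME, hval, rfl⟩
    obtain ⟨muS, hMES, hvalS, hcardS⟩ := Nat.find_spec hex
    obtain ⟨η, h1, h2, h3, h4⟩ := hii muS hMES
    refine ⟨η, h1, h2, by rw [h3, hvalS], ?_⟩
    intro μ hME hval
    have hle : Nat.find hex ≤ Multiset.card μ :=
      Nat.find_min' hex ⟨μ, hME, hval, rfl⟩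
    omega
  -- (iv) → (iii)
  have h_iv_iii : (∀ z : A, (∃ μ : Multiset (A × ℕ), IsMultiExpansion D μ ∧ mvalue Φ μ = z) →
      ∃ η : ℕ →₀ A, IsExpansion D η ∧ IsWNAF w η ∧ evalue Φ η = z ∧
        ∀ μ : Multiset (A × ℕ), IsMultiExpansion D μ → mvalue Φ μ = z →
          eweight η ≤ Multiset.card μ) →
      ∀ η θ : ℕ →₀ A, IsExpansion D η → IsWNAF w η →
        IsExpansion D θ → IsWNAF w θ →
        ∃ ξ : ℕ →₀ A, IsExpansion D ξ ∧ IsWNAF w ξ ∧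
          evalue Φ ξ = evalue Φ η + evalue Φ θ ∧
          eweight ξ ≤ eweight η + eweight θ := by
    intro hiv η θ hη1 _ hθ1 _
    have hME : IsMultiExpansion D (optToM η + optToM θ) := by
      intro x hx
      rcases Multiset.mem_add.1 hx with hx | hx
      · exact opt_toM_ME hη1 x hx
      · exact opt_toM_ME hθ1 x hx
    have hval : mvalue Φ (optToM η + optToM θ) = evalue Φ η + evalue Φ θ := by
      rw [opt_mvalue_add, opt_toM_mvalue, opt_toM_mvalue]
    obtain ⟨ξ, h1, h2, h3, h4⟩ := hiv (evalue Φ η + evalue Φ θ)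
      ⟨optToM η + optToM θ, hME, hval⟩
    refine ⟨ξ, h1, h2, h3, ?_⟩
    have := h4 (optToM η + optToM θ) hME hval
    rw [Multiset.card_add, opt_toM_card, opt_toM_card] at this
    exact this
  exact ⟨⟨h_i_ii, h_ii_i⟩, ⟨h_ii_iii, fun h => opt_iii_to_ii Φ h0 h⟩,
    ⟨h_iii_iv, h_iv_iii⟩⟩
end

section
/- Let τ = 1 + i, let w ≥ 4 be an even integer, and set A := 2^{w/2−1}·(1 − i), B := A/τ = −2^{w/2−1}·i, and s := −i^{1−w/2} (a power of i, so s ∈ {1, −1, i, −i}). Then: (a) each of 1, i, −1, −i is a minimal norm representative modulo τ^w; (b) A − 1 is a minimal norm representative modulo τ^w; (c) −B − 1 is a minimal norm representative modulo τ^w; (d) i·τ^{w−1} − s^{−1} is a minimal norm representative modulo τ^w; (e) in ℤ[i] the identity (A − 1)·τ^{w−1} + (−s^{−1}) = s·τ^{2w} + (−B − 1)·τ^w + (i·τ^{w−1} − s^{−1}) holds. -/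
open Complex

noncomputable section

/-- The lattice `ℤ[τ] = {a + b·τ : a, b ∈ ℤ}` as a subset of `ℂ`. -/
def Ztau (τ : ℂ) : Set ℂ := {z | ∃ a b : ℤ, z = (a : ℂ) + (b : ℂ) * τ}

/-- `z` is divisible by `τ` in `ℤ[τ]`. -/
def TauDvd (τ : ℂ) (z : ℂ) : Prop := ∃ y ∈ Ztau τ, z = τ * y

/-- `x` is a minimal norm representative modulo `τ^w`: an element of `ℤ[τ]`,
not divisible by `τ`, of minimal norm in its residue class modulo `τ^w`. -/
def MinNormRep (τ : ℂ) (w : ℕ) (x : ℂ) : Prop :=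
  x ∈ Ztau τ ∧ ¬ TauDvd τ x ∧
    ∀ y ∈ Ztau τ, ‖x‖ ≤ ‖x - τ ^ w * y‖

/-- `A = 2^{w/2−1}·(1 − i)`. -/
def A15 (w : ℕ) : ℂ := 2 ^ (w / 2 - 1) * (1 - I)

/-- `B = A/τ` for `τ = 1 + i`. -/
def B15 (w : ℕ) : ℂ := A15 w / (1 + I)

/-- `s = −i^{1−w/2}`. -/
def s15 (w : ℕ) : ℂ := -(I ^ ((1 : ℤ) - (w : ℤ) / 2))


lemma real_key (M t : ℝ) (hM : 0 ≤ M) (ht : |t| ≤ M / 2) (a : ℤ) :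
    t ^ 2 ≤ (t - M * (a : ℝ)) ^ 2 := by
  obtain ⟨h1, h2⟩ := abs_le.mp ht
  rcases lt_trichotomy a 0 with h | h | h
  · have ha : (a : ℝ) ≤ -1 := by exact_mod_cast (by omega : a ≤ -1)
    have k1 : M * a ≤ -M := by nlinarith
    have k2 : M * a - 2 * t ≤ 0 := by linarith
    nlinarith
  · subst h; simp
  · have ha : (1 : ℝ) ≤ a := by exact_mod_cast h
    have k1 : M ≤ M * a := by nlinarith
    have k2 : 0 ≤ M * a - 2 * t := by linarith
    nlinarith

lemma gauss_pow_I (n : ℕ) (p q : ℤ) :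
    ∃ p' q' : ℤ, I ^ n * ((p : ℂ) + (q : ℂ) * I) = (p' : ℂ) + (q' : ℂ) * I := by
  induction n generalizing p q with
  | zero => exact ⟨p, q, by simp⟩
  | succ n ih =>
    obtain ⟨p', q', h⟩ := ih p q
    refine ⟨-q', p', ?_⟩
    have : (I : ℂ) ^ (n + 1) * ((p : ℂ) + q * I) = I * (I ^ n * ((p : ℂ) + q * I)) := by ring
    rw [this, h]
    push_cast
    linear_combination (q' : ℂ) * Complex.I_sq

lemma gauss_eq {p q a b : ℤ} (h : (p : ℂ) + (q : ℂ) * I = (a : ℂ) + (b : ℂ) * I) :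
    p = a ∧ q = b := by
  rw [Complex.ext_iff] at h
  simp at h
  exact_mod_cast h

lemma tau_sq : ((1 : ℂ) + I) ^ 2 = 2 * I := by linear_combination Complex.I_sq

lemma tau_pow (m : ℕ) : ((1 : ℂ) + I) ^ (2 * m) = 2 ^ m * I ^ m := by
  rw [pow_mul, tau_sq, mul_pow]

lemma minRep (m : ℕ) (hm : 2 ≤ m) (p q : ℤ) (hp : |p| ≤ 2 ^ (m - 1))
    (hq : |q| ≤ 2 ^ (m - 1)) (hodd : Odd (p ^ 2 + q ^ 2)) :
    MinNormRep (1 + I) (2 * m) ((p : ℂ) + (q : ℂ) * I) := by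
  refine ⟨⟨p - q, q, by push_cast; ring⟩, ?_, ?_⟩
  · rintro ⟨y, ⟨a, b, rfl⟩, hxy⟩
    have h1 : (p : ℂ) + (q : ℂ) * I = ((a : ℤ) : ℂ) + (((a + 2 * b : ℤ)) : ℂ) * I := by
      rw [hxy]; push_cast; linear_combination (b : ℂ) * Complex.I_sq
    obtain ⟨hpa, hqa⟩ := gauss_eq h1
    have heven : Even (p ^ 2 + q ^ 2) := by
      refine ⟨a ^ 2 + 2 * a * b + 2 * b ^ 2, by rw [hpa, hqa]; ring⟩
    exact ((Int.not_odd_iff_even.mpr heven)) hodd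
  · rintro y ⟨a, b, rfl⟩
    obtain ⟨p', q', hpq⟩ := gauss_pow_I m (a + b) b
    have hrw : (p : ℂ) + (q : ℂ) * I - (1 + I) ^ (2 * m) * ((a : ℂ) + (b : ℂ) * (1 + I))
        = (((p - 2 ^ m * p' : ℤ) : ℝ) : ℂ) + (((q - 2 ^ m * q' : ℤ) : ℝ) : ℂ) * I := by
      rw [tau_pow]
      have hy : ((a : ℂ) + (b : ℂ) * (1 + I)) = ((a + b : ℤ) : ℂ) + ((b : ℤ) : ℂ) * I := by
        push_cast; ring
      rw [hy, mul_assoc, hpq]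
      push_cast; ring
    have hx : (p : ℂ) + (q : ℂ) * I = (((p : ℤ) : ℝ) : ℂ) + (((q : ℤ) : ℝ) : ℂ) * I := by
      push_cast; ring
    rw [hrw, hx, Complex.norm_add_mul_I, Complex.norm_add_mul_I]
    apply Real.sqrt_le_sqrt
    have hhalf : (2 : ℝ) ^ (m - 1) = 2 ^ m / 2 := by
      rw [eq_div_iff (two_ne_zero), ← pow_succ]
      congr 1; omega
    have hp' : |(p : ℝ)| ≤ 2 ^ m / 2 := by
      rw [← hhalf]; exact_mod_cast hp
    have hq' : |(q : ℝ)| ≤ 2 ^ m / 2 := by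
      rw [← hhalf]; exact_mod_cast hq
    push_cast
    exact add_le_add (real_key (2 ^ m) p (by positivity) hp' p')
      (real_key (2 ^ m) q (by positivity) hq' q')

/-- The counter-example construction for `τ = 1 + i` and even `w ≥ 4`:
(a)–(d) the listed elements are minimal norm representatives modulo `τ^w`,
(b') `B = −2^{w/2−1}·i`, and (e) the stated identity holds in `ℤ[i]`. -/
theorem nonopt_construction_p2_q2_w_even (w : ℕ) (hw : 4 ≤ w) (hweven : Even w) :
    (MinNormRep (1 + I) w 1 ∧ MinNormRep (1 + I) w I ∧
      MinNormRep (1 + I) w (-1) ∧ MinNormRep (1 + I) w (-I)) ∧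
    MinNormRep (1 + I) w (A15 w - 1) ∧
    MinNormRep (1 + I) w (-(B15 w) - 1) ∧
    MinNormRep (1 + I) w (I * (1 + I) ^ (w - 1) - (s15 w)⁻¹) ∧
    B15 w = -(2 ^ (w / 2 - 1)) * I ∧
    (A15 w - 1) * (1 + I) ^ (w - 1) + (-(s15 w)⁻¹)
      = s15 w * (1 + I) ^ (2 * w) + (-(B15 w) - 1) * (1 + I) ^ w
        + (I * (1 + I) ^ (w - 1) - (s15 w)⁻¹) := by
  obtain ⟨m, rfl⟩ := hweven
  rw [show m + m = 2 * m from (two_mul m).symm] at hw ⊢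
  have hm : 2 ≤ m := by omega
  have hτne : (1 : ℂ) + I ≠ 0 := by
    intro h0
    have := congrArg Complex.re h0
    simp at this
  have hdiv : 2 * m / 2 = m := by omega
  -- basic integer facts
  have hpow1 : (1 : ℤ) ≤ 2 ^ (m - 1) := one_le_pow₀ (by norm_num)
  obtain ⟨k, hk⟩ : Even ((2 : ℤ) ^ (m - 1)) := by
    refine ⟨2 ^ (m - 2), ?_⟩
    rw [show m - 1 = (m - 2) + 1 from by omega, pow_succ]; ring
  -- complex rewrites
  have hA : A15 (2 * m) = (2 : ℂ) ^ (m - 1) * (1 - I) := by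
    simp only [A15, hdiv]
  have hB : B15 (2 * m) = -(2 : ℂ) ^ (m - 1) * I := by
    simp only [B15, hA]
    rw [div_eq_iff hτne]
    linear_combination ((2 : ℂ) ^ (m - 1)) * Complex.I_sq
  have hsmul : s15 (2 * m) * (I ^ m * I) = 1 := by
    simp only [s15]
    rw [show ((2 * m : ℕ) : ℤ) / 2 = (m : ℤ) from by push_cast; omega]
    rw [show (I : ℂ) ^ m * I = I ^ ((m : ℤ) + 1) from by
      rw [zpow_add₀ I_ne_zero, zpow_natCast, zpow_one]]
    rw [neg_mul, ← zpow_add₀ I_ne_zero]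
    rw [show (1 : ℤ) - (m : ℤ) + ((m : ℤ) + 1) = 2 from by ring]
    rw [show (I : ℂ) ^ (2 : ℤ) = I ^ (2 : ℕ) from zpow_two I ▸ (sq I).symm ▸ rfl]
    rw [Complex.I_sq]; ring
  have hsinv : (s15 (2 * m))⁻¹ = I ^ m * I := inv_eq_of_mul_eq_one_right hsmul
  have hseq : s15 (2 * m) = (I ^ m * I)⁻¹ := eq_inv_of_mul_eq_one_left hsmul
  have hcne : (I : ℂ) ^ m * I ≠ 0 := by
    exact mul_ne_zero (pow_ne_zero _ I_ne_zero) I_ne_zero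
  have h2 : (2 : ℂ) ^ m = 2 ^ (m - 1) * 2 := by
    rw [← pow_succ]; congr 1; omega
  have hτw1 : ((1 : ℂ) + I) ^ (2 * m - 1) = 2 ^ (m - 1) * I ^ m * (1 - I) := by
    apply mul_right_cancel₀ hτne
    rw [← pow_succ, show 2 * m - 1 + 1 = 2 * m from by omega, tau_pow, h2]
    linear_combination ((2 : ℂ) ^ (m - 1) * I ^ m) * Complex.I_sq
  have hsτ : s15 (2 * m) * (1 + I) ^ (2 * (2 * m))
      = -(4 * ((2 : ℂ) ^ (m - 1)) ^ 2 * I ^ m * I) := by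
    rw [hseq, show (2 : ℕ) * (2 * m) = (2 * m) * 2 from by ring, pow_mul, tau_pow,
      inv_mul_eq_iff_eq_mul₀ hcne, h2]
    linear_combination (4 * ((2 : ℂ) ^ (m - 1)) ^ 2 * ((I : ℂ) ^ m) ^ 2) * Complex.I_sq
  -- generic constructor
  have mk : ∀ (p q : ℤ) (x : ℂ), x = (p : ℂ) + (q : ℂ) * I → |p| ≤ 2 ^ (m - 1) →
      |q| ≤ 2 ^ (m - 1) → Odd (p ^ 2 + q ^ 2) → MinNormRep (1 + I) (2 * m) x :=
    fun p q x hx hp hq hodd => hx ▸ minRep m hm p q hp hq hodd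
  have hb0 : |(0 : ℤ)| ≤ 2 ^ (m - 1) := by simp
  have hb1 : |(1 : ℤ)| ≤ 2 ^ (m - 1) := by rw [abs_one]; exact hpow1
  have hbn1 : |(-1 : ℤ)| ≤ 2 ^ (m - 1) := by rw [abs_neg]; exact hb1
  have hbh : |(2 ^ (m - 1) : ℤ)| ≤ 2 ^ (m - 1) := by
    rw [_root_.abs_of_nonneg (by positivity : (0:ℤ) ≤ 2 ^ (m-1))]
  have hbnh : |(-(2 ^ (m - 1)) : ℤ)| ≤ 2 ^ (m - 1) := by rw [abs_neg]; exact hbh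
  have hbh1 : |(2 ^ (m - 1) - 1 : ℤ)| ≤ 2 ^ (m - 1) := by
    rw [abs_le]; constructor <;> linarith
  have hb1h : |(1 - 2 ^ (m - 1) : ℤ)| ≤ 2 ^ (m - 1) := by
    rw [abs_le]; constructor <;> linarith
  have hodd1 : Odd ((1 : ℤ) ^ 2 + (0 : ℤ) ^ 2) := ⟨0, by norm_num⟩
  have hodd2 : Odd ((0 : ℤ) ^ 2 + (1 : ℤ) ^ 2) := ⟨0, by norm_num⟩
  have hodd3 : Odd ((-1 : ℤ) ^ 2 + (0 : ℤ) ^ 2) := ⟨0, by norm_num⟩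
  have hodd4 : Odd ((0 : ℤ) ^ 2 + (-1 : ℤ) ^ 2) := ⟨0, by norm_num⟩
  have hoddA : Odd ((2 ^ (m - 1) - 1 : ℤ) ^ 2 + (-(2 ^ (m - 1)) : ℤ) ^ 2) :=
    ⟨4 * k ^ 2 - 2 * k, by rw [hk]; ring⟩
  have hoddC : Odd ((-1 : ℤ) ^ 2 + (2 ^ (m - 1) : ℤ) ^ 2) :=
    ⟨2 * k ^ 2, by rw [hk]; ring⟩
  have hoddD1 : Odd ((2 ^ (m - 1) : ℤ) ^ 2 + (2 ^ (m - 1) - 1 : ℤ) ^ 2) :=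
    ⟨4 * k ^ 2 - 2 * k, by rw [hk]; ring⟩
  have hoddD2 : Odd ((1 - 2 ^ (m - 1) : ℤ) ^ 2 + (2 ^ (m - 1) : ℤ) ^ 2) :=
    ⟨4 * k ^ 2 - 2 * k, by rw [hk]; ring⟩
  have hoddD3 : Odd ((-(2 ^ (m - 1)) : ℤ) ^ 2 + (1 - 2 ^ (m - 1) : ℤ) ^ 2) :=
    ⟨4 * k ^ 2 - 2 * k, by rw [hk]; ring⟩
  have hoddD4 : Odd ((2 ^ (m - 1) - 1 : ℤ) ^ 2 + (-(2 ^ (m - 1)) : ℤ) ^ 2) :=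
    ⟨4 * k ^ 2 - 2 * k, by rw [hk]; ring⟩
  refine ⟨⟨mk 1 0 1 (by push_cast; ring) hb1 hb0 hodd1,
      mk 0 1 I (by push_cast; ring) hb0 hb1 hodd2,
      mk (-1) 0 (-1) (by push_cast; ring) hbn1 hb0 hodd3,
      mk 0 (-1) (-I) (by push_cast; ring) hb0 hbn1 hodd4⟩,
    ?_, ?_, ?_, ?_, ?_⟩
  · -- A - 1
    refine mk (2 ^ (m - 1) - 1) (-(2 ^ (m - 1))) _ ?_ hbh1 hbnh hoddA
    rw [hA]; push_cast; ring
  · -- -B - 1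
    refine mk (-1) (2 ^ (m - 1)) _ ?_ hbn1 hbh hoddC
    rw [hB]; push_cast; ring
  · -- part (d)
    have hxd : I * (1 + I) ^ (2 * m - 1) - (s15 (2 * m))⁻¹
        = I ^ m * ((2 : ℂ) ^ (m - 1) + ((2 : ℂ) ^ (m - 1) - 1) * I) := by
      rw [hτw1, hsinv]
      linear_combination (-(2 : ℂ) ^ (m - 1) * I ^ m) * Complex.I_sq
    have hrm : (I : ℂ) ^ m = I ^ (m % 4) := by
      conv_lhs => rw [← Nat.div_add_mod m 4]
      rw [pow_add, pow_mul, Complex.I_pow_four, one_pow, one_mul]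
    have hlt : m % 4 < 4 := Nat.mod_lt _ (by norm_num)
    rw [hxd, hrm]
    set r := m % 4 with hr4
    interval_cases r
    · refine mk (2 ^ (m - 1)) (2 ^ (m - 1) - 1) _ ?_ hbh hbh1 hoddD1
      push_cast; ring
    · refine mk (1 - 2 ^ (m - 1)) (2 ^ (m - 1)) _ ?_ hb1h hbh hoddD2
      push_cast; linear_combination ((2 : ℂ) ^ (m - 1) - 1) * Complex.I_sq
    · refine mk (-(2 ^ (m - 1))) (1 - 2 ^ (m - 1)) _ ?_ hbnh hb1h hoddD3
      push_cast
      linear_combination ((2 : ℂ) ^ (m - 1) + ((2 : ℂ) ^ (m - 1) - 1) * I) * Complex.I_sq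
    · refine mk (2 ^ (m - 1) - 1) (-(2 ^ (m - 1))) _ ?_ hbh1 hbnh hoddD4
      push_cast
      linear_combination ((2 : ℂ) ^ (m - 1) * I + ((2 : ℂ) ^ (m - 1) - 1) * (I ^ 2 - 1)) * Complex.I_sq
  · -- part (b')
    rw [hB, hdiv]
  · -- part (e)
    rw [hA, hB, hsinv, hsτ, hτw1, tau_pow, h2]
    linear_combination ((2 : ℂ) ^ (m - 1) * I ^ m * ((2 : ℂ) ^ (m - 1) + 1)) * Complex.I_sq
end
end
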